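/- Let P be a polyhedral closed convex cone in R^d that is spanning and pointed. If (z_n) is a sequence in P converging to 0, then there exists a subsequence (z_{n_k}) with z_{n_k} - z_{n_{k+1}} ∈ P for all k (i.e., the subsequence is decreasing with respect to the order induced by P) and z_{n_k} → 0. -/

import Mathlib

theorem stmt4 {d : ℕ} (P : Set (EuclideanSpace ℝ (Fin d)))
    (hclosed : IsClosed P) (hconv : Convex ℝ P)
    (hcone : ∀ c : ℝ, 0 ≤ c → ∀ x ∈ P, c • x ∈ P)
    (hspan : ∀ v : EuclideanSpace ℝ (Fin d), ∃ x ∈ P, ∃ y ∈ P, v = x - y)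
    (hpointed : P ∩ (-P) = {0})
    (hpoly : ∃ (k : ℕ) (v : Fin k → EuclideanSpace ℝ (Fin d)),
      P = {x | ∃ r : Fin k → ℝ, (∀ i, 0 ≤ r i) ∧ x = ∑ i, r i • v i})
    (z : ℕ → EuclideanSpace ℝ (Fin d))
    (hz : ∀ n, z n ∈ P)
    (hlim : Filter.Tendsto z Filter.atTop (nhds 0)) :
    ∃ φ : ℕ → ℕ, StrictMono φ ∧
      (∀ k, z (φ k) - z (φ (k + 1)) ∈ P) ∧
      Filter.Tendsto (fun k => z (φ k)) Filter.atTop (nhds 0) := by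
  classical
  obtain ⟨k, v, hP⟩ := hpoly
  -- membership criterion
  have hmem : ∀ c : Fin k → ℝ, (∀ i, 0 ≤ c i) → (∑ i, c i • v i) ∈ P := by
    intro c hc; rw [hP]; exact ⟨c, hc, rfl⟩
  have hvP : ∀ i, v i ∈ P := by
    intro i
    have hc : ∀ j, 0 ≤ (Pi.single i (1:ℝ) : Fin k → ℝ) j := by
      intro j; by_cases h : j = i <;> simp [Pi.single_apply, h]
    have h := hmem (Pi.single i (1:ℝ) : Fin k → ℝ) hc
    have hsum : ∑ j, (Pi.single i (1:ℝ) : Fin k → ℝ) j • v j = v i := by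
      rw [Finset.sum_eq_single i]
      · simp
      · intro j _ hj; simp [Pi.single_apply, hj]
      · simp
    rwa [hsum] at h
  -- choose coefficient representations, zeroed out on zero generators
  have hr : ∀ n, ∃ r : Fin k → ℝ, (∀ i, 0 ≤ r i) ∧ z n = ∑ i, r i • v i := by
    intro n; have h := hz n; rw [hP] at h; exact h
  choose r hr0 hrz using hr
  set s : ℕ → Fin k → ℝ := fun n i => if v i = 0 then 0 else r n i with hs_def
  have hs0 : ∀ n i, 0 ≤ s n i := by
    intro n i
    simp only [hs_def]
    split
    · exact le_refl 0
    · exact hr0 n i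
  have hsz : ∀ n, z n = ∑ i, s n i • v i := by
    intro n
    rw [hrz n]
    refine Finset.sum_congr rfl fun i _ => ?_
    by_cases h : v i = 0 <;> simp [hs_def, h]
  -- uniform smallness of coefficients
  have hsmall : ∀ ε : ℝ, 0 < ε → ∃ N, ∀ n, N ≤ n → ∀ i, s n i < ε := by
    by_cases hv : ∀ i, v i = 0
    · intro ε hε
      exact ⟨0, fun n _ i => by simp only [hs_def, hv i, if_pos]; exact hε⟩
    · push_neg at hv
      obtain ⟨i0, hi0⟩ := hv
      set K : Set (Fin k → ℝ) :=
        {c | (∀ i, 0 ≤ c i) ∧ (∀ i, v i = 0 → c i = 0) ∧ ∑ i, c i = 1} with hK_def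
      have hKne : K.Nonempty := by
        refine ⟨Pi.single i0 1, fun j => ?_, fun j hj => ?_, ?_⟩
        · by_cases h : j = i0 <;> simp [Pi.single_apply, h]
        · by_cases h : j = i0
          · exact absurd (h ▸ hj) hi0
          · simp [Pi.single_apply, h]
        · simp [Finset.sum_pi_single']
      have hKcl : IsClosed K := by
        have h1 : IsClosed {c : Fin k → ℝ | ∀ i, 0 ≤ c i} := by
          rw [Set.setOf_forall]
          exact isClosed_iInter fun i => isClosed_le continuous_const (continuous_apply i)
        have h2 : IsClosed {c : Fin k → ℝ | ∀ i, v i = 0 → c i = 0} := by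
          rw [Set.setOf_forall]
          refine isClosed_iInter fun i => ?_
          by_cases h : v i = 0
          · simp only [h, forall_true_left]
            exact isClosed_eq (continuous_apply i) continuous_const
          · simp [h]
        have h3 : IsClosed {c : Fin k → ℝ | ∑ i, c i = 1} :=
          isClosed_eq (continuous_finset_sum _ fun i _ => continuous_apply i) continuous_const
        rw [hK_def, Set.setOf_and, Set.setOf_and]
        exact h1.inter (h2.inter h3)
      have hKsub : K ⊆ Set.Icc (0 : Fin k → ℝ) 1 := by
        rintro c ⟨hc0, _, hc1⟩
        refine ⟨fun i => hc0 i, fun i => ?_⟩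
        calc c i ≤ ∑ j, c j := Finset.single_le_sum (fun j _ => hc0 j) (Finset.mem_univ i)
        _ = 1 := hc1
      have hKcpt : IsCompact K := (isCompact_Icc).of_isClosed_subset hKcl hKsub
      have hfcont : Continuous fun c : Fin k → ℝ => ‖∑ i, c i • v i‖ :=
        (continuous_finset_sum _ fun i _ => (continuous_apply i).smul continuous_const).norm
      obtain ⟨c0, hc0K, hc0min⟩ := hKcpt.exists_isMinOn hKne hfcont.continuousOn
      set cmin : ℝ := ‖∑ i, c0 i • v i‖ with hcmin_def
      have hcminpos : 0 < cmin := by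
        rcases (norm_nonneg (∑ i, c0 i • v i)).lt_or_eq with h | h
        · exact h
        · exfalso
          have hzero : ∑ j, c0 j • v j = 0 := norm_eq_zero.mp h.symm
          obtain ⟨hc0nn, hc0z, hc0s⟩ := hc0K
          have hex : ∃ i, c0 i ≠ 0 := by
            by_contra hcon
            push_neg at hcon
            simp [hcon] at hc0s
          obtain ⟨i, hi⟩ := hex
          have hvi : v i ≠ 0 := fun hh => hi (hc0z i hh)
          have hw1 : c0 i • v i ∈ P := hcone _ (hc0nn i) _ (hvP i)
          have hsplit : ∑ j, c0 j • v j
              = (∑ j, (if j = i then (0:ℝ) else c0 j) • v j) + c0 i • v i := by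
            have h2 : (c0 i • v i) = ∑ j, (if j = i then c0 j • v j else 0) := by
              rw [Finset.sum_ite_eq' Finset.univ i (fun j => c0 j • v j)]
              simp
            calc ∑ j, c0 j • v j
                = ∑ j, ((if j = i then (0:ℝ) else c0 j) • v j
                    + if j = i then c0 j • v j else 0) := by
                  refine Finset.sum_congr rfl fun j _ => ?_
                  by_cases h : j = i <;> simp [h]
              _ = _ := by rw [Finset.sum_add_distrib, ← h2]
          have hw2' : (∑ j, (if j = i then (0:ℝ) else c0 j) • v j) ∈ P := by
            refine hmem _ fun j => ?_
            by_cases h : j = i <;> simp [h, hc0nn j]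
          have heq : (∑ j, (if j = i then (0:ℝ) else c0 j) • v j) = -(c0 i • v i) :=
            eq_neg_of_add_eq_zero_left (hsplit.symm.trans hzero)
          have hmemneg : c0 i • v i ∈ P ∩ (-P) := by
            refine ⟨hw1, ?_⟩
            rw [Set.mem_neg]
            rw [heq] at hw2'
            exact hw2'
          rw [hpointed] at hmemneg
          rcases smul_eq_zero.mp (Set.mem_singleton_iff.mp hmemneg) with h' | h'
          · exact hi h'
          · exact hvi h'
      -- the bound : s n i * cmin ≤ ‖z n‖
      have hbound : ∀ n i, s n i * cmin ≤ ‖z n‖ := by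
        intro n i
        set t : ℝ := ∑ j, s n j with ht_def
        have htnn : 0 ≤ t := Finset.sum_nonneg fun j _ => hs0 n j
        rcases htnn.lt_or_eq with hpos | hzero
        · -- t > 0
          have hK' : (fun j => s n j / t) ∈ K := by
            refine ⟨fun j => div_nonneg (hs0 n j) htnn, fun j hj => ?_, ?_⟩
            · simp [hs_def, hj]
            · rw [← Finset.sum_div, div_self hpos.ne']
          have hle := hc0min hK'
          have heq2 : ∑ j, (s n j / t) • v j = (t⁻¹ : ℝ) • z n := by
            rw [hsz n, Finset.smul_sum]
            refine Finset.sum_congr rfl fun j _ => ?_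
            rw [smul_smul, div_eq_inv_mul]
          have hle2 : cmin ≤ t⁻¹ * ‖z n‖ := by
            have : cmin ≤ ‖∑ j, (s n j / t) • v j‖ := hle
            rwa [heq2, norm_smul, Real.norm_eq_abs, abs_of_pos (inv_pos.mpr hpos)] at this
          have hsi : s n i ≤ t := Finset.single_le_sum (fun j _ => hs0 n j) (Finset.mem_univ i)
          have htc : t * cmin ≤ ‖z n‖ := by
            rw [← mul_le_mul_iff_right₀ hpos] at hle2
            calc t * cmin ≤ t * (t⁻¹ * ‖z n‖) := by nlinarith
              _ = ‖z n‖ := by field_simp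
          nlinarith
        · -- t = 0, so all s n j = 0
          have hall : ∀ j ∈ Finset.univ, s n j = 0 :=
            (Finset.sum_eq_zero_iff_of_nonneg fun j _ => hs0 n j).mp hzero.symm
          rw [hall i (Finset.mem_univ i), zero_mul]
          exact norm_nonneg _
      intro ε hε
      have hnorm : Filter.Tendsto (fun n => ‖z n‖) Filter.atTop (nhds 0) := by
        simpa using hlim.norm
      have : ∀ᶠ n in Filter.atTop, ‖z n‖ < ε * cmin := by
        have := hnorm.eventually (gt_mem_nhds (by positivity : (0:ℝ) < ε * cmin))
        exact this
      obtain ⟨N, hN⟩ := Filter.eventually_atTop.mp this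
      refine ⟨N, fun n hn i => ?_⟩
      have h1 := hbound n i
      have h2 := hN n hn
      nlinarith
  -- pigeonhole on the zero set of coefficients
  set Z : ℕ → Finset (Fin k) := fun n => Finset.univ.filter (fun i => s n i = 0) with hZ_def
  obtain ⟨S, hSinf⟩ := Finite.exists_infinite_fiber Z
  set A : Set ℕ := Z ⁻¹' {S} with hA_def
  have hA : A.Infinite := Set.infinite_coe_iff.mp hSinf
  -- greedy step
  have hstep : ∀ n ∈ A, ∃ m, m ∈ A ∧ n < m ∧ ∀ i, s m i ≤ s n i := by
    intro n hn
    have hεex : ∃ ε : ℝ, 0 < ε ∧ ∀ i, s n i ≠ 0 → ε ≤ s n i := by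
      by_cases hF : (Finset.univ.filter (fun i => s n i ≠ 0) : Finset (Fin k)).Nonempty
      · obtain ⟨b, hbmem, hbmin⟩ := Finset.exists_min_image _ (s n) hF
        have hb : s n b ≠ 0 := (Finset.mem_filter.mp hbmem).2
        exact ⟨s n b, lt_of_le_of_ne (hs0 n b) (Ne.symm hb),
          fun i hi => hbmin i (Finset.mem_filter.mpr ⟨Finset.mem_univ i, hi⟩)⟩
      · exact ⟨1, one_pos, fun i hi =>
          absurd ⟨i, Finset.mem_filter.mpr ⟨Finset.mem_univ i, hi⟩⟩ hF⟩
    obtain ⟨ε, hε0, hεmin⟩ := hεex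
    obtain ⟨N, hN⟩ := hsmall ε hε0
    have hAgt : ∃ m ∈ A, max n N < m := by
      have := (hA.diff (Set.finite_Iic (max n N))).nonempty
      obtain ⟨m, hm1, hm2⟩ := this
      exact ⟨m, hm1, by simpa [Set.mem_Iic] using hm2⟩
    obtain ⟨m, hmA, hm⟩ := hAgt
    refine ⟨m, hmA, lt_of_le_of_lt (le_max_left n N) hm, fun i => ?_⟩
    by_cases h0 : s n i = 0
    · have hi : i ∈ Z n := Finset.mem_filter.mpr ⟨Finset.mem_univ i, h0⟩
      have hSn : Z n = S := hn
      have hSm : Z m = S := hmA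
      have him : i ∈ Z m := by rw [hSm, ← hSn]; exact hi
      have : s m i = 0 := (Finset.mem_filter.mp him).2
      rw [this, h0]
    · exact le_trans (le_of_lt (hN m (le_trans (le_max_right n N) hm.le) i)) (hεmin i h0)
  -- build the subsequence
  obtain ⟨n0, hn0⟩ := hA.nonempty
  choose g hg1 hg2 hg3 using hstep
  let f : {n // n ∈ A} → {n // n ∈ A} := fun x => ⟨g x.1 x.2, hg1 x.1 x.2⟩
  let ψ : ℕ → {n // n ∈ A} := fun m => f^[m] ⟨n0, hn0⟩
  have hψsucc : ∀ m, ψ (m + 1) = f (ψ m) := fun m => Function.iterate_succ_apply' f m _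
  refine ⟨fun m => (ψ m).1, ?_, ?_, ?_⟩
  · apply strictMono_nat_of_lt_succ
    intro m
    rw [hψsucc m]
    exact hg2 (ψ m).1 (ψ m).2
  · intro m
    have hle : ∀ i, s (ψ (m + 1)).1 i ≤ s (ψ m).1 i := by
      rw [hψsucc m]
      exact hg3 (ψ m).1 (ψ m).2
    rw [hsz (ψ m).1, hsz (ψ (m+1)).1, ← Finset.sum_sub_distrib]
    have hterm : ∀ j ∈ Finset.univ,
        s (ψ m).1 j • v j - s (ψ (m+1)).1 j • v j
          = (s (ψ m).1 j - s (ψ (m+1)).1 j) • v j :=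
      fun j _ => (sub_smul _ _ _).symm
    rw [Finset.sum_congr rfl hterm]
    exact hmem _ fun i => sub_nonneg.mpr (hle i)
  · have hmono : StrictMono fun m => (ψ m).1 := by
      apply strictMono_nat_of_lt_succ
      intro m
      rw [hψsucc m]
      exact hg2 (ψ m).1 (ψ m).2
    exact hlim.comp hmono.tendsto_atTop
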